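/- arXiv:1207.6630 — 5 statements merged into one kernel-verified Lean document; each statement's English description precedes it below -/
import Mathlib

section
/- Output burstiness bound: if D(0,t) ≥ inf_{0≤u≤t} A(0,u)·S(u,t) for all t, D(0,t) ≤ A(0,t), and D(τ,t) = D(0,t)/D(0,τ) (all processes strictly positive), then for all 0 ≤ τ ≤ t, D(τ,t) ≤ sup_{0≤u≤τ} A(u,t)/S(u,τ), where A(u,t) = A(0,t)/A(0,u). -/
/-- Output burstiness bound: the SNR departure process is bounded by the
(min,×) deconvolution of arrivals and service. -/
theorem snr_output_bound (A D S : ℕ → ℕ → ℝ)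
    (hA : ∀ τ t, 0 < A τ t) (hD : ∀ τ t, 0 < D τ t) (hS : ∀ τ t, 0 < S τ t)
    (hserver : ∀ t, D 0 t ≥ sInf ((fun u => A 0 u * S u t) '' Set.Icc 0 t))
    (hcaus : ∀ t, D 0 t ≤ A 0 t)
    (hDmul : ∀ τ t, D τ t = D 0 t / D 0 τ) :
    ∀ τ t : ℕ, τ ≤ t →
      D τ t ≤ sSup ((fun u => (A 0 t / A 0 u) / S u τ) '' Set.Icc 0 τ) := by
  intro τ t hτt
  set f : ℕ → ℝ := fun u => A 0 u * S u τ with hf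
  have hfin : (Set.Icc (0:ℕ) τ).Finite := Set.finite_Icc 0 τ
  have hne : ((f '' Set.Icc 0 τ)).Nonempty :=
    ⟨f 0, ⟨0, ⟨le_refl 0, Nat.zero_le τ⟩, rfl⟩⟩
  have hmem : sInf (f '' Set.Icc 0 τ) ∈ f '' Set.Icc 0 τ :=
    Set.Nonempty.csInf_mem hne (hfin.image f)
  obtain ⟨u₀, hu₀, hfu₀⟩ := hmem
  have hserv := hserver τ
  rw [← hfu₀] at hserv
  have hfpos : 0 < f u₀ := mul_pos (hA 0 u₀) (hS u₀ τ)
  have h1 : D τ t ≤ (A 0 t / A 0 u₀) / S u₀ τ := by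
    rw [hDmul, div_div]
    exact div_le_div₀ (hA 0 t).le (hcaus t) hfpos hserv
  refine h1.trans (le_csSup ?_ ⟨u₀, hu₀, rfl⟩)
  exact (hfin.image _).bddAbove
end

section
/- Mellin bound of the (min,×) convolution: let X(τ,t), Y(τ,t) be independent nonnegative bivariate random processes and s < 1. Then E[((X ⊗ Y)(τ,t))^{s-1}] ≤ Σ_{u=τ}^{t} E[(X(τ,u))^{s-1}]·E[(Y(u,t))^{s-1}], where (X ⊗ Y)(τ,t) = inf_{τ≤u≤t} X(τ,u)Y(u,t). -/
open MeasureTheory ProbabilityTheory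

/-- Mellin bound of the (min,×) convolution: for independent positive bivariate
processes X, Y and s < 1,
E[((X ⊗ Y)(τ,t))^{s-1}] ≤ Σ_{u=τ}^{t} E[X(τ,u)^{s-1}]·E[Y(u,t)^{s-1}]. -/
theorem mellin_minTimesConv_bound {Ω : Type*} [MeasurableSpace Ω] (μ : Measure Ω)
    [IsProbabilityMeasure μ] (X Y : ℕ → ℕ → Ω → ℝ) (s : ℝ) (hs : s < 1)
    (τ t : ℕ) (hτt : τ ≤ t)
    (hXpos : ∀ τ' t' ω, 0 < X τ' t' ω) (hYpos : ∀ τ' t' ω, 0 < Y τ' t' ω)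
    (hXm : ∀ τ' t', Measurable (X τ' t')) (hYm : ∀ τ' t', Measurable (Y τ' t'))
    (hind : ∀ u, IndepFun (X τ u) (Y u t) μ) :
    ∫⁻ ω, ENNReal.ofReal
        ((Finset.inf' (Finset.Icc τ t) ⟨τ, by simp [hτt]⟩
          fun u => X τ u ω * Y u t ω) ^ (s - 1)) ∂μ
      ≤ ∑ u ∈ Finset.Icc τ t,
          (∫⁻ ω, ENNReal.ofReal (X τ u ω ^ (s - 1)) ∂μ) *
            ∫⁻ ω, ENNReal.ofReal (Y u t ω ^ (s - 1)) ∂μ := by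
  have key : ∀ u, (∫⁻ ω, ENNReal.ofReal ((X τ u ω * Y u t ω) ^ (s - 1)) ∂μ)
      = (∫⁻ ω, ENNReal.ofReal (X τ u ω ^ (s - 1)) ∂μ) *
          ∫⁻ ω, ENNReal.ofReal (Y u t ω ^ (s - 1)) ∂μ := by
    intro u
    have hφ : Measurable fun x : ℝ => ENNReal.ofReal (x ^ (s - 1)) :=
      ENNReal.measurable_ofReal.comp (measurable_id.pow_const _)
    have hindep : IndepFun (fun ω => ENNReal.ofReal (X τ u ω ^ (s - 1)))
        (fun ω => ENNReal.ofReal (Y u t ω ^ (s - 1))) μ :=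
      (hind u).comp hφ hφ
    have := lintegral_mul_eq_lintegral_mul_lintegral_of_indepFun
      (f := fun ω => ENNReal.ofReal (X τ u ω ^ (s - 1)))
      (g := fun ω => ENNReal.ofReal (Y u t ω ^ (s - 1)))
      (hφ.comp (hXm τ u)) (hφ.comp (hYm u t)) hindep
    rw [← this]
    refine lintegral_congr fun ω => ?_
    simp only [Pi.mul_apply]
    rw [Real.mul_rpow (hXpos τ u ω).le (hYpos u t ω).le,
      ENNReal.ofReal_mul (Real.rpow_nonneg (hXpos τ u ω).le _)]
  calc ∫⁻ ω, ENNReal.ofReal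
        ((Finset.inf' (Finset.Icc τ t) ⟨τ, by simp [hτt]⟩
          fun u => X τ u ω * Y u t ω) ^ (s - 1)) ∂μ
      ≤ ∫⁻ ω, ∑ u ∈ Finset.Icc τ t,
          ENNReal.ofReal ((X τ u ω * Y u t ω) ^ (s - 1)) ∂μ := by
        refine lintegral_mono fun ω => ?_
        obtain ⟨u₀, hu₀, heq⟩ := Finset.exists_mem_eq_inf' (⟨τ, by simp [hτt]⟩ :
          (Finset.Icc τ t).Nonempty) (fun u => X τ u ω * Y u t ω)
        rw [heq]
        exact Finset.single_le_sum (f := fun u =>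
          ENNReal.ofReal ((X τ u ω * Y u t ω) ^ (s - 1)))
          (fun _ _ => zero_le) hu₀
    _ = ∑ u ∈ Finset.Icc τ t,
          ∫⁻ ω, ENNReal.ofReal ((X τ u ω * Y u t ω) ^ (s - 1)) ∂μ := by
        refine lintegral_finset_sum _ fun u _ => ?_
        exact ENNReal.measurable_ofReal.comp
          (((hXm τ u).mul (hYm u t)).pow_const _)
    _ ≤ _ := by
        refine Finset.sum_le_sum fun u _ => ?_
        rw [key u]
end

section
/- Mellin bound of the (min,×) deconvolution: let X(τ,t), Y(τ,t) be independent strictly positive bivariate random processes and s > 1. Then E[((X ⊘ Y)(τ,t))^{s-1}] ≤ Σ_{u=0}^{τ} E[(X(u,t))^{s-1}]·E[(Y(u,τ))^{1-s}], where (X ⊘ Y)(τ,t) = sup_{0≤u≤τ} X(u,t)/Y(u,τ). -/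
open MeasureTheory ProbabilityTheory

/-- Mellin bound of the (min,×) deconvolution: for independent strictly positive
bivariate processes X, Y and s > 1,
E[((X ⊘ Y)(τ,t))^{s-1}] ≤ Σ_{u=0}^{τ} E[X(u,t)^{s-1}]·E[Y(u,τ)^{1-s}]. -/
theorem mellin_minTimesDeconv_bound {Ω : Type*} [MeasurableSpace Ω] (μ : Measure Ω)
    [IsProbabilityMeasure μ] (X Y : ℕ → ℕ → Ω → ℝ) (s : ℝ) (hs : 1 < s)
    (τ t : ℕ) (hτt : τ ≤ t)
    (hXpos : ∀ τ' t' ω, 0 < X τ' t' ω) (hYpos : ∀ τ' t' ω, 0 < Y τ' t' ω)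
    (hXm : ∀ τ' t', Measurable (X τ' t')) (hYm : ∀ τ' t', Measurable (Y τ' t'))
    (hind : ∀ u, IndepFun (X u t) (Y u τ) μ) :
    ∫⁻ ω, ENNReal.ofReal
        ((Finset.sup' (Finset.Icc 0 τ) ⟨0, by simp⟩
          fun u => X u t ω / Y u τ ω) ^ (s - 1)) ∂μ
      ≤ ∑ u ∈ Finset.Icc 0 τ,
          (∫⁻ ω, ENNReal.ofReal (X u t ω ^ (s - 1)) ∂μ) *
            ∫⁻ ω, ENNReal.ofReal (Y u τ ω ^ (1 - s)) ∂μ := by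
  have hs1 : (0:ℝ) < s - 1 := by linarith
  -- pointwise bound and splitting of each term
  have key : ∀ ω, ENNReal.ofReal
        ((Finset.sup' (Finset.Icc 0 τ) ⟨0, by simp⟩
          fun u => X u t ω / Y u τ ω) ^ (s - 1))
      ≤ ∑ u ∈ Finset.Icc 0 τ,
          ENNReal.ofReal (X u t ω ^ (s - 1)) * ENNReal.ofReal (Y u τ ω ^ (1 - s)) := by
    intro ω
    obtain ⟨u0, hu0, hsup⟩ := Finset.exists_mem_eq_sup' (⟨0, by simp⟩ : (Finset.Icc 0 τ).Nonempty)
      (fun u => X u t ω / Y u τ ω)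
    rw [hsup]
    have hterm : ENNReal.ofReal ((X u0 t ω / Y u0 τ ω) ^ (s - 1))
        = ENNReal.ofReal (X u0 t ω ^ (s - 1)) * ENNReal.ofReal (Y u0 τ ω ^ (1 - s)) := by
      rw [Real.div_rpow (hXpos u0 t ω).le (hYpos u0 τ ω).le, div_eq_mul_inv,
        ← Real.rpow_neg (hYpos u0 τ ω).le, neg_sub,
        ENNReal.ofReal_mul (Real.rpow_nonneg (hXpos u0 t ω).le _)]
    rw [hterm]
    exact Finset.single_le_sum (f := fun u =>
      ENNReal.ofReal (X u t ω ^ (s - 1)) * ENNReal.ofReal (Y u τ ω ^ (1 - s)))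
      (fun _ _ => zero_le) hu0
  calc ∫⁻ ω, ENNReal.ofReal
        ((Finset.sup' (Finset.Icc 0 τ) ⟨0, by simp⟩
          fun u => X u t ω / Y u τ ω) ^ (s - 1)) ∂μ
      ≤ ∫⁻ ω, ∑ u ∈ Finset.Icc 0 τ,
          ENNReal.ofReal (X u t ω ^ (s - 1)) * ENNReal.ofReal (Y u τ ω ^ (1 - s)) ∂μ :=
        lintegral_mono key
    _ = ∑ u ∈ Finset.Icc 0 τ, ∫⁻ ω,
          ENNReal.ofReal (X u t ω ^ (s - 1)) * ENNReal.ofReal (Y u τ ω ^ (1 - s)) ∂μ := by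
        refine lintegral_finset_sum _ fun u _ => ?_
        have := hXm u t; have := hYm u τ; fun_prop
    _ = ∑ u ∈ Finset.Icc 0 τ,
          (∫⁻ ω, ENNReal.ofReal (X u t ω ^ (s - 1)) ∂μ) *
            ∫⁻ ω, ENNReal.ofReal (Y u τ ω ^ (1 - s)) ∂μ := by
        refine Finset.sum_congr rfl fun u _ => ?_
        have hmX : Measurable (fun ω => ENNReal.ofReal (X u t ω ^ (s - 1))) := by
          have := hXm u t; fun_prop
        have hmY : Measurable (fun ω => ENNReal.ofReal (Y u τ ω ^ (1 - s))) := by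
          have := hYm u τ; fun_prop
        have h1 : Measurable (fun x : ℝ => ENNReal.ofReal (x ^ (s - 1))) := by fun_prop
        have h2 : Measurable (fun x : ℝ => ENNReal.ofReal (x ^ (1 - s))) := by fun_prop
        exact lintegral_mul_eq_lintegral_mul_lintegral_of_indepFun''
          hmX.aemeasurable hmY.aemeasurable ((hind u).comp h1 h2)
end

section
/- Cascade Mellin bound: for N i.i.d. fading channels with service S_n(τ,t) = Π_{i=τ}^{t-1} g(γ_i^{(n)}) where all g(γ_i^{(n)}) are i.i.d. positive random variables, the network service S_net = S₁ ⊗ ⋯ ⊗ S_N satisfies, for s < 1, E[(S_net(τ,t))^{s-1}] ≤ C(N-1+t-τ, t-τ) · (E[g(γ)^{s-1}])^{t-τ}, where C(n,k) denotes the binomial coefficient. -/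
open MeasureTheory ProbabilityTheory
open scoped ENNReal

/-- The (min,×) convolution of ω-indexed bivariate processes. -/
noncomputable def convP {Ω : Type*} (X Y : ℕ → ℕ → Ω → ℝ) : ℕ → ℕ → Ω → ℝ :=
  fun τ t ω => sInf ((fun u => X τ u ω * Y u t ω) '' Set.Icc τ t)

/-- The (min,×) convolution of a cascade of n+1 service processes:
S₀ ⊗ S₁ ⊗ ⋯ ⊗ Sₙ. -/
noncomputable def cascade {Ω : Type*} :
    (n : ℕ) → (Fin (n + 1) → ℕ → ℕ → Ω → ℝ) → ℕ → ℕ → Ω → ℝ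
  | 0, S => S 0
  | n + 1, S => convP (S 0) (cascade n fun i => S i.succ)

lemma convP_eq_inf' {Ω : Type*} (X Y : ℕ → ℕ → Ω → ℝ) {τ t : ℕ} (h : τ ≤ t) (ω : Ω) :
    convP X Y τ t ω
      = (Finset.Icc τ t).inf' (Finset.nonempty_Icc.2 h) (fun u => X τ u ω * Y u t ω) := by
  rw [convP, Finset.inf'_eq_csInf_image, Finset.coe_Icc]

lemma measurable_inf' {Ω ι : Type*} {m' : MeasurableSpace Ω} (s : Finset ι) (H : s.Nonempty)
    (f : ι → Ω → ℝ) (hf : ∀ i, Measurable[m'] (f i)) :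
    Measurable[m'] fun ω => s.inf' H fun i => f i ω := by
  induction H using Finset.Nonempty.cons_induction with
  | singleton i =>
      simp only [Finset.inf'_singleton]
      exact hf i
  | cons a s ha hs ih =>
      have hrw : (fun ω => (Finset.cons a s ha).inf' (Finset.cons_nonempty ha) fun i => f i ω)
          = fun ω => (f a ω) ⊓ (s.inf' hs fun i => f i ω) := by
        funext ω; exact Finset.inf'_cons (α := ℝ) (H := hs) (fun i => f i ω)
      rw [hrw]
      exact (hf a).min ih

lemma cascade_measurable {Ω : Type*} {m' : MeasurableSpace Ω} :
    ∀ (n : ℕ) (S : Fin (n + 1) → ℕ → ℕ → Ω → ℝ),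
      (∀ i a b, Measurable[m'] (S i a b)) → ∀ τ t, Measurable[m'] (cascade n S τ t)
  | 0, S, hS, τ, t => hS 0 τ t
  | (n+1), S, hS, τ, t => by
      have hY := cascade_measurable n (fun i => S i.succ) (fun i a b => hS i.succ a b)
      show Measurable[m'] (convP (S 0) (cascade n fun i => S i.succ) τ t)
      by_cases h : τ ≤ t
      · have heq : convP (S 0) (cascade n fun i => S i.succ) τ t
            = fun ω => (Finset.Icc τ t).inf' (Finset.nonempty_Icc.2 h)
                (fun u => S 0 τ u ω * (cascade n fun i => S i.succ) u t ω) := by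
          funext ω; exact convP_eq_inf' _ _ h ω
        rw [heq]
        exact measurable_inf' _ _ _ (fun u => (hS 0 τ u).mul (hY u t))
      · have heq : convP (S 0) (cascade n fun i => S i.succ) τ t = fun _ => 0 := by
          funext ω
          show sInf _ = 0
          rw [Set.Icc_eq_empty h, Set.image_empty, Real.sInf_empty]
        rw [heq]; exact measurable_const

lemma cascade_pos {Ω : Type*} :
    ∀ (n : ℕ) (S : Fin (n + 1) → ℕ → ℕ → Ω → ℝ),
      (∀ i a b ω, 0 < S i a b ω) → ∀ τ t (ω : Ω), τ ≤ t → 0 < cascade n S τ t ω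
  | 0, S, hS, τ, t, ω, _ => hS 0 τ t ω
  | (n+1), S, hS, τ, t, ω, h => by
      show 0 < convP (S 0) (cascade n fun i => S i.succ) τ t ω
      rw [convP_eq_inf' _ _ h ω]
      obtain ⟨u, hu, hval⟩ :=
        Finset.exists_mem_eq_inf' (Finset.nonempty_Icc.2 h)
          (fun u => S 0 τ u ω * (cascade n fun i => S i.succ) u t ω)
      rw [hval]
      have hu2 := (Finset.mem_Icc.mp hu).2
      exact mul_pos (hS 0 τ u ω)
        (cascade_pos n _ (fun i a b ω => hS i.succ a b ω) u t ω hu2)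

lemma lintegral_prod_of_indep {ι Ω : Type*} [MeasurableSpace Ω] {μ : Measure Ω}
    [IsProbabilityMeasure μ] {f : ι → Ω → ℝ≥0∞}
    (hind : iIndepFun f μ)
    (hmeas : ∀ i, Measurable (f i)) (s : Finset ι) :
    ∫⁻ ω, ∏ i ∈ s, f i ω ∂μ = ∏ i ∈ s, ∫⁻ ω, f i ω ∂μ := by
  classical
  induction s using Finset.cons_induction with
  | empty => simp
  | cons a s ha ih =>
      simp only [Finset.prod_cons]
      rw [← ih]
      have hm : Measurable fun ω => ∏ i ∈ s, f i ω :=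
        Finset.measurable_prod s (fun i _ => hmeas i)
      have hI : IndepFun (f a) (fun ω => ∏ i ∈ s, f i ω) μ := by
        have h1 := (hind.indepFun_finset_prod_of_notMem hmeas ha).symm
        have h2 : (∏ j ∈ s, f j) = fun ω => ∏ i ∈ s, f i ω := by
          funext ω; simp
        rwa [h2] at h1
      exact lintegral_mul_eq_lintegral_mul_lintegral_of_indepFun'' (hmeas a).aemeasurable
        hm.aemeasurable hI

lemma iIndepFun_precomp {Ω ι ι' : Type*} [MeasurableSpace Ω] {μ : Measure Ω}
    (e : ι' → ι) (r : ι → ι') (hre : ∀ j, r (e j) = j) (f : ι → Ω → ℝ)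
    (h : iIndepFun f μ) :
    iIndepFun (fun j => f (e j)) μ := by
  classical
  rw [iIndepFun_iff] at h ⊢
  intro s f' hf'
  have hinj : ∀ x ∈ s, ∀ y ∈ s, e x = e y → x = y := by
    intro x _ y _ hxy
    have := congrArg r hxy
    rwa [hre, hre] at this
  have h2 := h (s.image e) (f' := fun i => f' (r i)) ?hmeas
  case hmeas =>
    intro i hi
    obtain ⟨j, hj, rfl⟩ := Finset.mem_image.mp hi
    simpa only [hre] using hf' j hj
  rw [Finset.set_biInter_finset_image, Finset.prod_image hinj] at h2
  simpa only [hre] using h2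

lemma choose_flip (a b : ℕ) : (a + b).choose a = (a + b).choose b := by
  have h := Nat.choose_symm (Nat.le_add_right a b)
  rw [Nat.add_sub_cancel_left] at h
  exact h.symm

lemma count_sum (N τ t : ℕ) (h : τ ≤ t) :
    ∑ u ∈ Finset.Icc τ t, Nat.choose (N + (t - u)) (t - u)
      = Nat.choose (N + 1 + (t - τ)) (t - τ) := by
  have hsummand : ∀ u, (N + (t - u)).choose (t - u) = ((t - u) + N).choose N := by
    intro u; rw [Nat.add_comm N (t - u)]; exact choose_flip _ _
  simp only [hsummand]
  have hbij : ∑ u ∈ Finset.Icc τ t, ((t - u) + N).choose N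
      = ∑ i ∈ Finset.range (t - τ + 1), (i + N).choose N := by
    refine Finset.sum_nbij' (fun u => t - u) (fun i => t - i) ?_ ?_ ?_ ?_ ?_
    · intro u hu
      have h1 := Finset.mem_Icc.mp hu
      show t - u ∈ Finset.range (t - τ + 1)
      exact Finset.mem_range.mpr (by omega)
    · intro i hi
      have h1 := Finset.mem_range.mp hi
      show t - i ∈ Finset.Icc τ t
      exact Finset.mem_Icc.mpr (by omega)
    · intro u hu
      have h1 := Finset.mem_Icc.mp hu
      show t - (t - u) = u
      omega
    · intro i hi
      have h1 := Finset.mem_range.mp hi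
      show t - (t - i) = i
      omega
    · intro u _
      rfl
  rw [hbij, Nat.sum_range_add_choose]
  rw [show N + 1 + (t - τ) = (t - τ) + (N + 1) by omega]
  rw [show t - τ + N + 1 = (t - τ) + (N + 1) by omega]
  exact (choose_flip (t - τ) (N + 1)).symm

lemma channel_lintegral {Ω κ : Type*} [MeasurableSpace Ω] (μ : Measure Ω)
    [IsProbabilityMeasure μ] (g₀ : Ω → ℝ) (s : ℝ) (G : κ → ℕ → Ω → ℝ)
    (hpos : ∀ n i ω, 0 < G n i ω) (hmeas : ∀ n i, Measurable (G n i))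
    (hid : ∀ n i, IdentDistrib (G n i) g₀ μ μ)
    (hind : iIndepFun (fun p : κ × ℕ => G p.1 p.2) μ)
    (n : κ) (a b : ℕ) :
    ∫⁻ ω, ENNReal.ofReal ((∏ i ∈ Finset.Ico a b, G n i ω) ^ (s - 1)) ∂μ
      = (∫⁻ ω, ENNReal.ofReal (g₀ ω ^ (s - 1)) ∂μ) ^ (b - a) := by
  classical
  have hφ : Measurable fun x : ℝ => ENNReal.ofReal (x ^ (s - 1)) := by fun_prop
  set F : κ × ℕ → Ω → ℝ≥0∞ := fun p ω => ENNReal.ofReal (G p.1 p.2 ω ^ (s - 1)) with hF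
  have hindF : iIndepFun F μ :=
    hind.comp (fun _ => fun x : ℝ => ENNReal.ofReal (x ^ (s - 1))) (fun _ => hφ)
  have hmeasF : ∀ p, Measurable (F p) := fun p => hφ.comp (hmeas p.1 p.2)
  have hptwise : ∀ ω, ENNReal.ofReal ((∏ i ∈ Finset.Ico a b, G n i ω) ^ (s - 1))
      = ∏ p ∈ (Finset.Ico a b).image (fun i => (n, i)), F p ω := by
    intro ω
    rw [← Real.finset_prod_rpow _ _ (fun i _ => (hpos n i ω).le) _,
      ENNReal.ofReal_prod_of_nonneg (fun i _ => Real.rpow_nonneg (hpos n i ω).le _)]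
    rw [Finset.prod_image (fun x _ y _ hxy => by simpa using congrArg Prod.snd hxy)]
  have hinj : Function.Injective (fun i : ℕ => (n, i)) := by
    intro x y hxy; simpa using congrArg Prod.snd hxy
  calc ∫⁻ ω, ENNReal.ofReal ((∏ i ∈ Finset.Ico a b, G n i ω) ^ (s - 1)) ∂μ
      = ∫⁻ ω, ∏ p ∈ (Finset.Ico a b).image (fun i => (n, i)), F p ω ∂μ := by
        exact lintegral_congr hptwise
    _ = ∏ p ∈ (Finset.Ico a b).image (fun i => (n, i)), ∫⁻ ω, F p ω ∂μ :=
        lintegral_prod_of_indep hindF hmeasF _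
    _ = ∏ _p ∈ (Finset.Ico a b).image (fun i => (n, i)),
          ∫⁻ ω, ENNReal.ofReal (g₀ ω ^ (s - 1)) ∂μ := by
        refine Finset.prod_congr rfl ?_
        intro p _
        exact ((hid p.1 p.2).comp hφ).lintegral_eq
    _ = (∫⁻ ω, ENNReal.ofReal (g₀ ω ^ (s - 1)) ∂μ) ^ (b - a) := by
        rw [Finset.prod_const, Finset.card_image_of_injective _ hinj, Nat.card_Ico]

lemma cascade_aux {Ω : Type*} [MeasurableSpace Ω] (μ : Measure Ω) [IsProbabilityMeasure μ]
    (g₀ : Ω → ℝ) (s : ℝ) :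
    ∀ (N : ℕ) (G : Fin (N + 1) → ℕ → Ω → ℝ),
      (∀ n i ω, 0 < G n i ω) → (∀ n i, Measurable (G n i)) →
      (∀ n i, IdentDistrib (G n i) g₀ μ μ) →
      iIndepFun (fun p : Fin (N + 1) × ℕ => G p.1 p.2) μ →
      ∀ τ t : ℕ, τ ≤ t →
      ∫⁻ ω, ENNReal.ofReal
          ((cascade N (fun n a b ω => ∏ i ∈ Finset.Ico a b, G n i ω) τ t ω) ^ (s - 1)) ∂μ
        ≤ (Nat.choose (N + (t - τ)) (t - τ)) *
            (∫⁻ ω, ENNReal.ofReal (g₀ ω ^ (s - 1)) ∂μ) ^ (t - τ) := by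
  intro N
  induction N with
  | zero =>
      intro G hpos hmeas hid hind τ t hτt
      have := channel_lintegral μ g₀ s G hpos hmeas hid hind 0 τ t
      rw [show (cascade 0 (fun n a b ω => ∏ i ∈ Finset.Ico a b, G n i ω) : ℕ → ℕ → Ω → ℝ)
          = fun a b ω => ∏ i ∈ Finset.Ico a b, G 0 i ω from rfl]
      rw [this]
      simp [Nat.choose_self]
  | succ N ih =>
      intro G hpos hmeas hid hind τ t hτt
      classical
      set M : ℝ≥0∞ := ∫⁻ ω, ENNReal.ofReal (g₀ ω ^ (s - 1)) ∂μ with hM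
      have hφ : Measurable fun x : ℝ => ENNReal.ofReal (x ^ (s - 1)) := by fun_prop
      -- abbreviations
      set Y : ℕ → ℕ → Ω → ℝ :=
        cascade N (fun n a b ω => ∏ i ∈ Finset.Ico a b, G n.succ i ω) with hYdef
      have hcas : (cascade (N + 1) (fun n a b ω => ∏ i ∈ Finset.Ico a b, G n i ω) :
          ℕ → ℕ → Ω → ℝ) τ t
          = convP (fun a b ω => ∏ i ∈ Finset.Ico a b, G 0 i ω) Y τ t := rfl
      set A : ℕ → Ω → ℝ≥0∞ :=
        fun u ω => ENNReal.ofReal ((∏ i ∈ Finset.Ico τ u, G 0 i ω) ^ (s - 1)) with hAdef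
      set B : ℕ → Ω → ℝ≥0∞ := fun u ω => ENNReal.ofReal ((Y u t ω) ^ (s - 1)) with hBdef
      have hYpos : ∀ u t' ω, u ≤ t' → 0 < Y u t' ω := by
        intro u t' ω hut
        exact cascade_pos N _ (fun i a b ω => Finset.prod_pos (fun j _ => hpos i.succ j ω))
          u t' ω hut
      have hYmeas : ∀ u t', Measurable (Y u t') :=
        fun u t' => cascade_measurable N _
          (fun i a b => Finset.measurable_prod _ (fun j _ => hmeas i.succ j)) u t'
      have hAmeas : ∀ u, Measurable (A u) :=
        fun u => hφ.comp (Finset.measurable_prod _ (fun j _ => hmeas 0 j))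
      have hBmeas : ∀ u, Measurable (B u) := fun u => hφ.comp (hYmeas u t)
      -- pointwise bound
      have hpt : ∀ ω, ENNReal.ofReal
          ((cascade (N + 1) (fun n a b ω => ∏ i ∈ Finset.Ico a b, G n i ω) τ t ω) ^ (s - 1))
          ≤ ∑ u ∈ Finset.Icc τ t, A u ω * B u ω := by
        intro ω
        have : (cascade (N + 1) (fun n a b ω => ∏ i ∈ Finset.Ico a b, G n i ω) τ t ω)
            = convP (fun a b ω => ∏ i ∈ Finset.Ico a b, G 0 i ω) Y τ t ω := rfl
        rw [this, convP_eq_inf' _ _ hτt ω]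
        obtain ⟨u₀, hu₀, hval⟩ :=
          Finset.exists_mem_eq_inf' (Finset.nonempty_Icc.2 hτt)
            (fun u => (∏ i ∈ Finset.Ico τ u, G 0 i ω) * Y u t ω)
        rw [hval]
        have hx : 0 < ∏ i ∈ Finset.Ico τ u₀, G 0 i ω :=
          Finset.prod_pos (fun j _ => hpos 0 j ω)
        have hy : 0 < Y u₀ t ω := hYpos u₀ t ω (Finset.mem_Icc.mp hu₀).2
        rw [Real.mul_rpow hx.le hy.le, ENNReal.ofReal_mul (Real.rpow_nonneg hx.le _)]
        exact Finset.single_le_sum (f := fun u => A u ω * B u ω)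
          (fun i _ => zero_le) hu₀
      -- independence of A u and B u
      have hIndep : ∀ u, IndepFun (A u) (B u) μ := by
        intro u
        set mG : Fin (N + 2) × ℕ → MeasurableSpace Ω :=
          fun p => MeasurableSpace.comap (fun ω => G p.1 p.2 ω) Real.measurableSpace with hmG
        have h_le : ∀ p, mG p ≤ ‹MeasurableSpace Ω› := fun p => (hmeas p.1 p.2).comap_le
        have hbig : Indep (⨆ p ∈ {q : Fin (N + 2) × ℕ | q.1 = 0}, mG p)
            (⨆ p ∈ {q : Fin (N + 2) × ℕ | q.1 ≠ 0}, mG p) μ :=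
          indep_iSup_of_disjoint h_le hind.iIndep
            (Set.disjoint_left.mpr (fun p hp hq => hq hp))
        have hG0 : ∀ i : ℕ,
            Measurable[⨆ p ∈ {q : Fin (N + 2) × ℕ | q.1 = 0}, mG p] (G 0 i) := by
          intro i
          refine Measurable.of_comap_le ?_
          exact le_iSup₂ (f := fun (p : Fin (N + 2) × ℕ)
            (_ : p ∈ {q : Fin (N + 2) × ℕ | q.1 = 0}) => mG p) ((0 : Fin (N + 2)), i) rfl
        have hG1 : ∀ (j : Fin (N + 1)) (i : ℕ),
            Measurable[⨆ p ∈ {q : Fin (N + 2) × ℕ | q.1 ≠ 0}, mG p] (G j.succ i) := by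
          intro j i
          refine Measurable.of_comap_le ?_
          exact le_iSup₂ (f := fun (p : Fin (N + 2) × ℕ)
            (_ : p ∈ {q : Fin (N + 2) × ℕ | q.1 ≠ 0}) => mG p) ((j.succ : Fin (N + 2)), i)
            (Fin.succ_ne_zero j)
        have hA' : Measurable[⨆ p ∈ {q : Fin (N + 2) × ℕ | q.1 = 0}, mG p] (A u) :=
          hφ.comp (Finset.measurable_prod _ (fun j _ => hG0 j))
        have hB' : Measurable[⨆ p ∈ {q : Fin (N + 2) × ℕ | q.1 ≠ 0}, mG p] (B u) :=
          hφ.comp ((cascade_measurable N _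
            (fun i a b => Finset.measurable_prod _ (fun j _ => hG1 i j)) u t))
        rw [IndepFun_iff_Indep]
        exact indep_of_indep_of_le_right (indep_of_indep_of_le_left hbig hA'.comap_le)
          hB'.comap_le
      -- integral of A
      have hAint : ∀ u, ∫⁻ ω, A u ω ∂μ = M ^ (u - τ) := by
        intro u
        exact channel_lintegral μ g₀ s G hpos hmeas hid hind 0 τ u
      -- integral of B via induction hypothesis
      have hBint : ∀ u, u ≤ t → ∫⁻ ω, B u ω ∂μ
          ≤ (Nat.choose (N + (t - u)) (t - u)) * M ^ (t - u) := by
        intro u hut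
        have hind' : iIndepFun
            (fun p : Fin (N + 1) × ℕ => G p.1.succ p.2) μ := by
          have := iIndepFun_precomp
            (e := fun q : Fin (N + 1) × ℕ => ((q.1.succ : Fin (N + 2)), q.2))
            (r := fun p : Fin (N + 2) × ℕ => ((⟨p.1.val - 1, by omega⟩ : Fin (N + 1)), p.2))
            (fun q => by
              refine Prod.ext ?_ rfl
              apply Fin.ext
              simp [Fin.val_succ])
            (fun p : Fin (N + 2) × ℕ => G p.1 p.2) hind
          exact this
        exact ih (fun i => G i.succ) (fun n i ω => hpos n.succ i ω)
          (fun n i => hmeas n.succ i) (fun n i => hid n.succ i) hind' u t hut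
      -- put everything together
      calc ∫⁻ ω, ENNReal.ofReal
            ((cascade (N + 1) (fun n a b ω => ∏ i ∈ Finset.Ico a b, G n i ω) τ t ω) ^ (s - 1)) ∂μ
          ≤ ∫⁻ ω, ∑ u ∈ Finset.Icc τ t, A u ω * B u ω ∂μ := lintegral_mono hpt
        _ = ∑ u ∈ Finset.Icc τ t, ∫⁻ ω, A u ω * B u ω ∂μ :=
            lintegral_finset_sum _ (fun u _ => (hAmeas u).mul (hBmeas u))
        _ = ∑ u ∈ Finset.Icc τ t, (∫⁻ ω, A u ω ∂μ) * ∫⁻ ω, B u ω ∂μ := by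
            refine Finset.sum_congr rfl ?_
            intro u _
            exact lintegral_mul_eq_lintegral_mul_lintegral_of_indepFun''
              (hAmeas u).aemeasurable (hBmeas u).aemeasurable (hIndep u)
        _ ≤ ∑ u ∈ Finset.Icc τ t,
              M ^ (u - τ) * ((Nat.choose (N + (t - u)) (t - u)) * M ^ (t - u)) := by
            refine Finset.sum_le_sum ?_
            intro u hu
            rw [hAint u]
            exact mul_le_mul_right (hBint u (Finset.mem_Icc.mp hu).2) _
        _ = ∑ u ∈ Finset.Icc τ t,
              ((Nat.choose (N + (t - u)) (t - u) : ℝ≥0∞)) * M ^ (t - τ) := by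
            refine Finset.sum_congr rfl ?_
            intro u hu
            have huu := Finset.mem_Icc.mp hu
            rw [mul_left_comm, ← pow_add, show u - τ + (t - u) = t - τ by omega]
        _ = (Nat.choose (N + 1 + (t - τ)) (t - τ)) * M ^ (t - τ) := by
            rw [← Finset.sum_mul, ← Nat.cast_sum, count_sum N τ t hτt]

/-- Cascade Mellin bound: for N+1 i.i.d. fading channels with service
S_n(τ,t) = Π_{i=τ}^{t-1} g(γ_i^{(n)}), the network service S_net = S₀ ⊗ ⋯ ⊗ S_N
satisfies, for s < 1,
E[(S_net(τ,t))^{s-1}] ≤ C(N+t-τ, t-τ)·(E[g(γ)^{s-1}])^{t-τ}. -/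
theorem cascade_mellin_bound {Ω : Type*} [MeasurableSpace Ω] (μ : Measure Ω)
    [IsProbabilityMeasure μ] (N : ℕ)
    (G : Fin (N + 1) → ℕ → Ω → ℝ) (g₀ : Ω → ℝ)
    (hpos : ∀ n i ω, 0 < G n i ω) (hg₀ : Measurable g₀)
    (hmeas : ∀ n i, Measurable (G n i))
    (hid : ∀ n i, IdentDistrib (G n i) g₀ μ μ)
    (hind : iIndepFun
      (fun p : Fin (N + 1) × ℕ => G p.1 p.2) μ)
    (S : Fin (N + 1) → ℕ → ℕ → Ω → ℝ)
    (hS : ∀ n τ t ω, S n τ t ω = ∏ i ∈ Finset.Ico τ t, G n i ω)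
    (s : ℝ) (hs : s < 1) (τ t : ℕ) (hτt : τ ≤ t) :
    ∫⁻ ω, ENNReal.ofReal ((cascade N S τ t ω) ^ (s - 1)) ∂μ
      ≤ (Nat.choose (N + (t - τ)) (t - τ)) *
          (∫⁻ ω, ENNReal.ofReal (g₀ ω ^ (s - 1)) ∂μ) ^ (t - τ) := by
  have hSeq : S = fun n a b ω => ∏ i ∈ Finset.Ico a b, G n i ω := by
    funext n a b ω; exact hS n a b ω
  subst hSeq
  exact cascade_aux μ g₀ s N G hpos hmeas hid hind τ t hτt
end

section
/- Leftover SNR service under cross traffic: suppose D_o(0,t)·D_c(0,t) ≥ inf_{0≤u≤t} A_o(0,u)·A_c(0,u)·S(u,t) for all t, where D_c(0,t) ≤ A_c(0,t) (causality) and A_c is multiplicative: A_c(u,t) = A_c(0,t)/A_c(0,u). Then D_o(0,t) ≥ inf_{0≤u≤t} A_o(0,u)·S_o(u,t), where S_o(u,t) = S(u,t)/A_c(u,t). If moreover D_c(0,t) ≤ inf_{0≤u≤t} A_c(0,u)·S(u,t), then D_o(0,t) ≥ inf_{0≤u≤t} A_o(0,u)·max{1, S_o(u,t)}. -/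
/-- Leftover SNR service under cross traffic: if the channel offers a dynamic SNR
server S to the aggregate of the through flow and cross traffic, then the through
flow receives the dynamic SNR server S_o(u,t) = S(u,t)/A_c(u,t); if moreover the
cross traffic departures are upper-bounded by A_c ⊗ S, the through flow receives
max{1, S_o}. -/
theorem leftover_snr_service (Ao Ac Do Dc S : ℕ → ℕ → ℝ)
    (hAo : ∀ τ t, 0 < Ao τ t) (hAc : ∀ τ t, 0 < Ac τ t)
    (hDo : ∀ τ t, 0 < Do τ t) (hDc : ∀ τ t, 0 < Dc τ t)
    (hSpos : ∀ τ t, 0 < S τ t)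
    (hAcMul : ∀ u t, Ac u t = Ac 0 t / Ac 0 u)
    (hserver : ∀ t, Do 0 t * Dc 0 t ≥
      sInf ((fun u => Ao 0 u * Ac 0 u * S u t) '' Set.Icc 0 t))
    (hcaus : ∀ t, Dc 0 t ≤ Ac 0 t) :
    (∀ t, Do 0 t ≥
        sInf ((fun u => Ao 0 u * (S u t / Ac u t)) '' Set.Icc 0 t)) ∧
    ((∀ t, Dc 0 t ≤ sInf ((fun u => Ac 0 u * S u t) '' Set.Icc 0 t)) →
      ∀ t, Do 0 t ≥
        sInf ((fun u => Ao 0 u * max 1 (S u t / Ac u t)) '' Set.Icc 0 t)) := by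
  -- helper data for each t: minimizer of the aggregate infimum
  have key : ∀ t, ∃ u ∈ Set.Icc 0 t,
      sInf ((fun u => Ao 0 u * Ac 0 u * S u t) '' Set.Icc 0 t)
        = Ao 0 u * Ac 0 u * S u t := by
    intro t
    have hfin : ((fun u => Ao 0 u * Ac 0 u * S u t) '' Set.Icc 0 t).Finite :=
      (Set.finite_Icc 0 t).image _
    have hne : ((fun u => Ao 0 u * Ac 0 u * S u t) '' Set.Icc 0 t).Nonempty :=
      (Set.nonempty_Icc.mpr (Nat.zero_le t)).image _
    obtain ⟨u, hu, hEq⟩ := hne.csInf_mem hfin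
    exact ⟨u, hu, hEq.symm⟩
  have hSo : ∀ u t, S u t / Ac u t = Ac 0 u * S u t / Ac 0 t := by
    intro u t
    rw [hAcMul u t]
    field_simp
  -- Part 1 bound: for the minimizer u, Do 0 t ≥ Ao 0 u * (S u t / Ac u t)
  have part1 : ∀ t u, u ∈ Set.Icc 0 t →
      sInf ((fun u => Ao 0 u * Ac 0 u * S u t) '' Set.Icc 0 t)
        = Ao 0 u * Ac 0 u * S u t →
      Ao 0 u * (S u t / Ac u t) ≤ Do 0 t := by
    intro t u hu hEq
    have h1 : Ao 0 u * Ac 0 u * S u t ≤ Do 0 t * Dc 0 t := by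
      rw [← hEq]; exact hserver t
    have h2 : Do 0 t * Dc 0 t ≤ Do 0 t * Ac 0 t :=
      mul_le_mul_of_nonneg_left (hcaus t) (hDo 0 t).le
    have h3 : Ao 0 u * Ac 0 u * S u t ≤ Do 0 t * Ac 0 t := h1.trans h2
    rw [hSo u t, mul_div_assoc', div_le_iff₀ (hAc 0 t)]
    calc Ao 0 u * (Ac 0 u * S u t) = Ao 0 u * Ac 0 u * S u t := by ring
      _ ≤ Do 0 t * Ac 0 t := h3
  constructor
  · intro t
    obtain ⟨u, hu, hEq⟩ := key t
    have hbdd : BddBelow ((fun u => Ao 0 u * (S u t / Ac u t)) '' Set.Icc 0 t) :=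
      ((Set.finite_Icc 0 t).image _).bddBelow
    exact le_trans (csInf_le hbdd ⟨u, hu, rfl⟩) (part1 t u hu hEq)
  · intro hDc' t
    obtain ⟨u, hu, hEq⟩ := key t
    -- Do 0 t ≥ Ao 0 u
    have hle : Dc 0 t ≤ Ac 0 u * S u t := by
      refine (hDc' t).trans ?_
      exact csInf_le ((Set.finite_Icc 0 t).image _).bddBelow ⟨u, hu, rfl⟩
    have h1 : Ao 0 u * Ac 0 u * S u t ≤ Do 0 t * Dc 0 t := by
      rw [← hEq]; exact hserver t
    have h2 : Ao 0 u * Dc 0 t ≤ Do 0 t * Dc 0 t := by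
      calc Ao 0 u * Dc 0 t ≤ Ao 0 u * (Ac 0 u * S u t) :=
            mul_le_mul_of_nonneg_left hle (hAo 0 u).le
        _ = Ao 0 u * Ac 0 u * S u t := by ring
        _ ≤ Do 0 t * Dc 0 t := h1
    have hAoDo : Ao 0 u ≤ Do 0 t :=
      le_of_mul_le_mul_right h2 (hDc 0 t)
    have hmax : Ao 0 u * max 1 (S u t / Ac u t) ≤ Do 0 t := by
      rw [mul_max_of_nonneg _ _ (hAo 0 u).le, mul_one]
      exact max_le hAoDo (part1 t u hu hEq)
    have hbdd : BddBelow
        ((fun u => Ao 0 u * max 1 (S u t / Ac u t)) '' Set.Icc 0 t) :=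
      ((Set.finite_Icc 0 t).image _).bddBelow
    exact le_trans (csInf_le hbdd ⟨u, hu, rfl⟩) hmax
end
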